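/- Let n ≥ 1 be an integer. For every positive integer k, set λ_k := k(k + 2n) and define φ_k(ρ) := F(−k/2, n + k/2, n + 1/2, ρ²). Then φ_k is a solution of the radial equation with parameter λ_k on (0,1): for every ρ ∈ (0,1), (1−ρ²)·φ_k''(ρ) + ((2n − (2n+1)ρ²)/ρ)·φ_k'(ρ) = −λ_k·φ_k(ρ); moreover φ_k is not identically zero (indeed φ_k(ρ) → 1 as ρ → 0⁺). -/

import Mathlib

open Set Filter
open scoped Topology Real

/-- Pochhammer symbol `(d)_k = d(d+1)⋯(d+k−1)` over the reals. -/
noncomputable def poch (d : ℝ) (k : ℕ) : ℝ := Polynomial.eval d (ascPochhammer ℝ k)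

/-- The `k`-th coefficient `(a)_k (b)_k / (k! (c)_k)` of the Gauss hypergeometric series. -/
noncomputable def hypCoeff (a b c : ℝ) (k : ℕ) : ℝ :=
  poch a k * poch b k / ((k.factorial : ℝ) * poch c k)

/-- The Gauss hypergeometric series `F(a,b,c,x) = Σ_k ((a)_k (b)_k / (k! (c)_k)) x^k`. -/
noncomputable def hypF (a b c x : ℝ) : ℝ := ∑' k : ℕ, hypCoeff a b c k * x ^ k



lemma poch_zero (d : ℝ) : poch d 0 = 1 := by simp [poch]

lemma poch_succ (d : ℝ) (j : ℕ) : poch d (j+1) = poch d j * (d + j) := by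
  simp [poch, ascPochhammer_succ_right]

lemma poch_pos {d : ℝ} (hd : 0 < d) (j : ℕ) : 0 < poch d j := by
  induction j with
  | zero => simp [poch_zero]
  | succ m ih => rw [poch_succ]; positivity

lemma hyp_rec {a b c : ℝ} (hc : 0 < c) (j : ℕ) :
    ((j:ℝ)+1) * ((j:ℝ) + c) * hypCoeff a b c (j+1)
      = ((j:ℝ)+a) * ((j:ℝ)+b) * hypCoeff a b c j := by
  have h1 : (poch c j) ≠ 0 := (poch_pos hc j).ne'
  have h2 : ((j.factorial : ℝ)) ≠ 0 := Nat.cast_ne_zero.2 j.factorial_ne_zero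
  have h3 : ((j:ℝ) + c) ≠ 0 := by positivity
  have h4 : ((j:ℝ) + 1) ≠ 0 := by positivity
  unfold hypCoeff
  rw [poch_succ, poch_succ, poch_succ, Nat.factorial_succ, Nat.cast_mul]
  field_simp
  push_cast
  ring

lemma key_div_tendsto (p q : ℝ) :
    Tendsto (fun j : ℕ => ((j:ℝ)+p)/((j:ℝ)+q)) atTop (𝓝 1) := by
  have hq : Tendsto (fun j : ℕ => (j:ℝ)+q) atTop atTop :=
    tendsto_atTop_add_const_right _ q tendsto_natCast_atTop_atTop
  have h0 : Tendsto (fun j : ℕ => (p-q) * ((j:ℝ)+q)⁻¹) atTop (𝓝 ((p-q) * 0)) :=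
    hq.inv_tendsto_atTop.const_mul _
  have h1 : Tendsto (fun j : ℕ => 1 + (p-q) * ((j:ℝ)+q)⁻¹) atTop (𝓝 1) := by
    simpa using tendsto_const_nhds.add h0
  refine h1.congr' ?_
  filter_upwards [hq.eventually_gt_atTop 0] with j hj
  field_simp
  ring

lemma ratio_tendsto {a b c : ℝ} (hc : 0 < c) :
    Tendsto (fun j : ℕ => |(j:ℝ)+a| * |(j:ℝ)+b| / (((j:ℝ)+1)*((j:ℝ)+c)))
      atTop (𝓝 1) := by
  have ha : Tendsto (fun j : ℕ => (j:ℝ)+a) atTop atTop :=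
    tendsto_atTop_add_const_right _ a tendsto_natCast_atTop_atTop
  have hb : Tendsto (fun j : ℕ => (j:ℝ)+b) atTop atTop :=
    tendsto_atTop_add_const_right _ b tendsto_natCast_atTop_atTop
  have h := (key_div_tendsto a 1).mul (key_div_tendsto b c)
  rw [mul_one] at h
  refine h.congr' ?_
  filter_upwards [ha.eventually_ge_atTop 0, hb.eventually_ge_atTop 0] with j h1 h2
  rw [abs_of_nonneg h1, abs_of_nonneg h2, div_mul_div_comm]

lemma master {a b c : ℝ} (hc : 0 < c) {x : ℝ} (hx0 : 0 ≤ x) (hx1 : x < 1) :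
    Summable (fun j : ℕ => ((j:ℝ)+1)^2 * |hypCoeff a b c j| * x^j) := by
  set A := hypCoeff a b c with hA
  set f : ℕ → ℝ := fun j => ((j:ℝ)+1)^2 * |A j| * x^j with hf
  have hfnn : ∀ j, 0 ≤ f j := fun j => by positivity
  set g : ℕ → ℝ := fun j =>
    (((j:ℝ)+2)/((j:ℝ)+1))^2 * (|(j:ℝ)+a| * |(j:ℝ)+b| / (((j:ℝ)+1)*((j:ℝ)+c))) * x
    with hg
  have hgt : Tendsto g atTop (𝓝 x) := by
    have := (((key_div_tendsto 2 1).pow 2).mul (ratio_tendsto hc (a := a) (b := b))).mul_const x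
    simpa using this
  refine summable_of_ratio_norm_eventually_le (r := (x+1)/2) (by linarith) ?_
  filter_upwards [hgt.eventually (gt_mem_nhds (show x < (x+1)/2 by linarith))] with j hj
  have hAbs : |A (j+1)| = (|(j:ℝ)+a| * |(j:ℝ)+b| / (((j:ℝ)+1)*((j:ℝ)+c))) * |A j| := by
    have h3 : ((j:ℝ) + c) ≠ 0 := by positivity
    have h4 : ((j:ℝ) + 1) ≠ 0 := by positivity
    have := hyp_rec (a := a) (b := b) hc j
    have hval : A (j+1) = (((j:ℝ)+a) * ((j:ℝ)+b) / (((j:ℝ)+1)*((j:ℝ)+c))) * A j := by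
      rw [hA]; field_simp; linarith [this]
    rw [hval, abs_mul, abs_div, abs_mul, abs_mul,
      abs_of_pos (show (0:ℝ) < (j:ℝ)+1 by positivity),
      abs_of_pos (show (0:ℝ) < (j:ℝ)+c by positivity)]
  have hkey : f (j+1) = g j * f j := by
    have h4 : ((j:ℝ) + 1) ≠ 0 := by positivity
    rw [hf, hg]
    simp only []
    push_cast
    rw [hAbs]
    field_simp
    ring
  rw [Real.norm_eq_abs, Real.norm_eq_abs, abs_of_nonneg (hfnn _), abs_of_nonneg (hfnn _),
    hkey]
  exact mul_le_mul_of_nonneg_right hj.le (hfnn j)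

lemma pow_nat_sub_le {r : ℝ} (h0 : 0 < r) (h1 : r ≤ 1) (j m : ℕ) :
    r^(j-m) ≤ r^j / r^m := by
  rw [le_div_iff₀ (by positivity), ← pow_add]
  exact pow_le_pow_of_le_one h0.le h1 (by omega)

section sums
variable {a b c : ℝ}

lemma sumS0 (hc : 0 < c) {r : ℝ} (hr0 : 0 < r) (hr1 : r < 1) :
    Summable (fun j : ℕ => |hypCoeff a b c j| * r^j) := by
  refine Summable.of_nonneg_of_le (fun j => by positivity) (fun j => ?_)
    (master (a := a) (b := b) hc hr0.le hr1)
  have h1 : (1:ℝ) ≤ ((j:ℝ)+1)^2 := by nlinarith [Nat.cast_nonneg (α := ℝ) j]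
  nlinarith [abs_nonneg (hypCoeff a b c j), pow_nonneg hr0.le j,
    mul_nonneg (abs_nonneg (hypCoeff a b c j)) (pow_nonneg hr0.le j)]

lemma sumS1 (hc : 0 < c) {r : ℝ} (hr0 : 0 < r) (hr1 : r < 1) :
    Summable (fun j : ℕ => (j:ℝ) * |hypCoeff a b c j| * r^(j-1)) := by
  refine Summable.of_nonneg_of_le (fun j => by positivity) (fun j => ?_)
    ((master (a := a) (b := b) hc hr0.le hr1).mul_left r⁻¹)
  calc (j:ℝ) * |hypCoeff a b c j| * r^(j-1)
      ≤ (((j:ℝ)+1)^2 * |hypCoeff a b c j|) * (r^j / r^1) := by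
        refine mul_le_mul ?_ (pow_nat_sub_le hr0 hr1.le j 1) (by positivity) (by positivity)
        refine mul_le_mul_of_nonneg_right ?_ (abs_nonneg _)
        nlinarith [Nat.cast_nonneg (α := ℝ) j]
    _ = r⁻¹ * (((j:ℝ)+1)^2 * |hypCoeff a b c j| * r^j) := by
        rw [pow_one]; field_simp

lemma sumS2 (hc : 0 < c) {r : ℝ} (hr0 : 0 < r) (hr1 : r < 1) :
    Summable (fun j : ℕ => (j:ℝ) * (j:ℝ) * |hypCoeff a b c j| * r^(j-1-1)) := by
  refine Summable.of_nonneg_of_le (fun j => by positivity) (fun j => ?_)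
    ((master (a := a) (b := b) hc hr0.le hr1).mul_left (r⁻¹^2))
  calc (j:ℝ) * (j:ℝ) * |hypCoeff a b c j| * r^(j-1-1)
      ≤ (((j:ℝ)+1)^2 * |hypCoeff a b c j|) * (r^j / r^2) := by
        refine mul_le_mul ?_ (pow_nat_sub_le hr0 hr1.le j 2) (by positivity) (by positivity)
        refine mul_le_mul_of_nonneg_right ?_ (abs_nonneg _)
        nlinarith [Nat.cast_nonneg (α := ℝ) j]
    _ = r⁻¹^2 * (((j:ℝ)+1)^2 * |hypCoeff a b c j| * r^j) := by
        field_simp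

lemma sumSW (hc : 0 < c) {r : ℝ} (hr0 : 0 < r) (hr1 : r < 1) :
    Summable (fun j : ℕ => (j:ℝ) * ((j:ℝ)+c+1) * |hypCoeff a b c j| * r^(j-1)) := by
  refine Summable.of_nonneg_of_le (fun j => by positivity) (fun j => ?_)
    ((master (a := a) (b := b) hc hr0.le hr1).mul_left ((2+c) * r⁻¹))
  calc (j:ℝ) * ((j:ℝ)+c+1) * |hypCoeff a b c j| * r^(j-1)
      ≤ ((2+c) * ((j:ℝ)+1)^2 * |hypCoeff a b c j|) * (r^j / r^1) := by
        refine mul_le_mul ?_ (pow_nat_sub_le hr0 hr1.le j 1) (by positivity) (by positivity)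
        refine mul_le_mul_of_nonneg_right ?_ (abs_nonneg _)
        nlinarith [Nat.cast_nonneg (α := ℝ) j, hc,
          mul_nonneg hc.le (mul_nonneg (Nat.cast_nonneg (α := ℝ) j) (Nat.cast_nonneg (α := ℝ) j)),
          mul_nonneg hc.le (Nat.cast_nonneg (α := ℝ) j)]
    _ = (2+c) * r⁻¹ * (((j:ℝ)+1)^2 * |hypCoeff a b c j| * r^j) := by
        rw [pow_one]; field_simp

end sums

noncomputable def hypF1 (a b c x : ℝ) : ℝ := ∑' j : ℕ, (j:ℝ) * hypCoeff a b c j * x^(j-1)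
noncomputable def hypF2 (a b c x : ℝ) : ℝ :=
  ∑' j : ℕ, (j:ℝ) * hypCoeff a b c j * (((j-1:ℕ):ℝ) * x^(j-1-1))

lemma hasDerivAt_hypF {a b c : ℝ} (hc : 0 < c) {r x : ℝ} (hr0 : 0 < r) (hr1 : r < 1)
    (hx : x ∈ Ioo (-r) r) :
    HasDerivAt (fun y => hypF a b c y) (hypF1 a b c x) x := by
  have h := hasDerivAt_tsum_of_isPreconnected
    (u := fun j : ℕ => (j:ℝ) * |hypCoeff a b c j| * r^(j-1))
    (g := fun (j : ℕ) (y : ℝ) => hypCoeff a b c j * y^j)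
    (g' := fun (j : ℕ) (y : ℝ) => (j:ℝ) * hypCoeff a b c j * y^(j-1))
    (sumS1 (a := a) (b := b) hc hr0 hr1) isOpen_Ioo (convex_Ioo _ _).isPreconnected
    (fun j y _ => by
      have := (hasDerivAt_pow j y).const_mul (hypCoeff a b c j)
      exact this.congr_deriv (by ring))
    (fun j y hy => by
      have h1 : |y| ≤ r := le_of_lt (abs_lt.2 ⟨hy.1, hy.2⟩)
      rw [Real.norm_eq_abs, abs_mul, abs_mul, abs_pow,
        abs_of_nonneg (Nat.cast_nonneg (α := ℝ) j)]
      exact mul_le_mul_of_nonneg_left (pow_le_pow_left₀ (abs_nonneg y) h1 _)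
        (by positivity))
    (y₀ := 0) ⟨by linarith, hr0⟩
    (by
      refine summable_of_ne_finset_zero (s := {0}) ?_
      intro j hj
      have : j ≠ 0 := by simpa using hj
      simp [zero_pow this])
    hx
  exact h

lemma hasDerivAt_hypF1 {a b c : ℝ} (hc : 0 < c) {r x : ℝ} (hr0 : 0 < r) (hr1 : r < 1)
    (hx : x ∈ Ioo (-r) r) :
    HasDerivAt (fun y => hypF1 a b c y) (hypF2 a b c x) x := by
  have h := hasDerivAt_tsum_of_isPreconnected
    (u := fun j : ℕ => (j:ℝ) * (j:ℝ) * |hypCoeff a b c j| * r^(j-1-1))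
    (g := fun (j : ℕ) (y : ℝ) => (j:ℝ) * hypCoeff a b c j * y^(j-1))
    (g' := fun (j : ℕ) (y : ℝ) => (j:ℝ) * hypCoeff a b c j * (((j-1:ℕ):ℝ) * y^(j-1-1)))
    (sumS2 (a := a) (b := b) hc hr0 hr1) isOpen_Ioo (convex_Ioo _ _).isPreconnected
    (fun j y _ => (hasDerivAt_pow (j-1) y).const_mul ((j:ℝ) * hypCoeff a b c j))
    (fun j y hy => by
      have h1 : |y| ≤ r := le_of_lt (abs_lt.2 ⟨hy.1, hy.2⟩)
      have h2 : ((j-1:ℕ):ℝ) ≤ (j:ℝ) := Nat.cast_le.2 (Nat.sub_le j 1)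
      have h3 : |y|^(j-1-1) ≤ r^(j-1-1) := pow_le_pow_left₀ (abs_nonneg y) h1 _
      have h4 := mul_le_mul h2 h3 (pow_nonneg (abs_nonneg y) _) (Nat.cast_nonneg (α := ℝ) j)
      rw [Real.norm_eq_abs, abs_mul, abs_mul, abs_mul, abs_pow,
        abs_of_nonneg (Nat.cast_nonneg (α := ℝ) j),
        abs_of_nonneg (Nat.cast_nonneg (α := ℝ) (j-1))]
      calc (j:ℝ) * |hypCoeff a b c j| * (((j-1:ℕ):ℝ) * |y|^(j-1-1))
          ≤ (j:ℝ) * |hypCoeff a b c j| * ((j:ℝ) * r^(j-1-1)) :=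
            mul_le_mul_of_nonneg_left h4 (by positivity)
        _ = (j:ℝ) * (j:ℝ) * |hypCoeff a b c j| * r^(j-1-1) := by ring)
    (y₀ := 0) ⟨by linarith, hr0⟩
    (by
      refine summable_of_ne_finset_zero (s := {0, 1}) ?_
      intro j hj
      have hj' : j ≠ 0 ∧ j ≠ 1 := by simpa using hj
      have : j - 1 ≠ 0 := by omega
      simp [zero_pow this])
    hx
  exact h

lemma hypODE {a b c : ℝ} (hc : 0 < c) {x : ℝ} (hx0 : 0 < x) (hx1 : x < 1) :
    x*(1-x) * hypF2 a b c x + (c - (a+b+1)*x) * hypF1 a b c x = a*b*hypF a b c x := by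
  set A := hypCoeff a b c with hA
  set r : ℝ := (x+1)/2 with hr
  have hr0 : 0 < r := by rw [hr]; linarith
  have hr1 : r < 1 := by rw [hr]; linarith
  have hxr : |x| ≤ r := by rw [abs_of_pos hx0, hr]; linarith
  set f0 : ℕ → ℝ := fun j => A j * x^j with hf0
  set f1 : ℕ → ℝ := fun j => (j:ℝ) * A j * x^(j-1) with hf1
  set f2 : ℕ → ℝ := fun j => (j:ℝ) * A j * (((j-1:ℕ):ℝ) * x^(j-1-1)) with hf2
  set W : ℕ → ℝ := fun j => (j:ℝ) * ((j:ℝ)+c-1) * A j * x^(j-1) with hW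
  have habs : ∀ (m : ℕ), |x|^m ≤ r^m := fun m => pow_le_pow_left₀ (abs_nonneg x) hxr m
  have sf0 : Summable f0 := by
    refine Summable.of_norm_bounded (sumS0 (a := a) (b := b) hc hr0 hr1) (fun j => ?_)
    rw [hf0, Real.norm_eq_abs, abs_mul, abs_pow]
    exact mul_le_mul_of_nonneg_left (habs j) (abs_nonneg _)
  have sf1 : Summable f1 := by
    refine Summable.of_norm_bounded (sumS1 (a := a) (b := b) hc hr0 hr1) (fun j => ?_)
    rw [hf1, Real.norm_eq_abs, abs_mul, abs_mul, abs_pow,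
      abs_of_nonneg (Nat.cast_nonneg (α := ℝ) j)]
    exact mul_le_mul_of_nonneg_left (habs _) (by positivity)
  have sf2 : Summable f2 := by
    refine Summable.of_norm_bounded (sumS2 (a := a) (b := b) hc hr0 hr1) (fun j => ?_)
    rw [hf2, Real.norm_eq_abs, abs_mul, abs_mul, abs_mul, abs_pow,
      abs_of_nonneg (Nat.cast_nonneg (α := ℝ) j),
      abs_of_nonneg (Nat.cast_nonneg (α := ℝ) (j-1))]
    have h2 : ((j-1:ℕ):ℝ) ≤ (j:ℝ) := Nat.cast_le.2 (Nat.sub_le j 1)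
    calc (j:ℝ) * |A j| * (((j-1:ℕ):ℝ) * |x|^(j-1-1))
        ≤ (j:ℝ) * |A j| * ((j:ℝ) * r^(j-1-1)) := by
          refine mul_le_mul_of_nonneg_left ?_ (by positivity)
          exact mul_le_mul h2 (habs _) (pow_nonneg (abs_nonneg x) _) (Nat.cast_nonneg _)
      _ = (j:ℝ) * (j:ℝ) * |A j| * r^(j-1-1) := by ring
  have sW : Summable W := by
    refine Summable.of_norm_bounded (sumSW (a := a) (b := b) hc hr0 hr1) (fun j => ?_)
    rw [hW, Real.norm_eq_abs, abs_mul, abs_mul, abs_mul, abs_pow,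
      abs_of_nonneg (Nat.cast_nonneg (α := ℝ) j)]
    have h2 : |(j:ℝ)+c-1| ≤ (j:ℝ)+c+1 := by
      rw [abs_le]
      constructor
      · have := Nat.cast_nonneg (α := ℝ) j; linarith
      · linarith
    exact mul_le_mul
      (mul_le_mul_of_nonneg_right
        (mul_le_mul_of_nonneg_left h2 (Nat.cast_nonneg (α := ℝ) j)) (abs_nonneg _))
      (habs _) (pow_nonneg (abs_nonneg x) _) (by positivity)
  have hW0 : Tendsto W atTop (𝓝 0) := sW.tendsto_atTop_zero
  have key : ∀ j : ℕ,
      x*(1-x) * f2 j + (c-(a+b+1)*x) * f1 j - a*b * f0 j = W j - W (j+1) := by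
    intro j
    match j with
    | 0 =>
      have h := hyp_rec (a := a) (b := b) hc 0
      rw [hf0, hf1, hf2, hW]
      push_cast at h ⊢
      norm_num at h ⊢
      linear_combination -h
    | 1 =>
      have h := hyp_rec (a := a) (b := b) hc 1
      rw [hf0, hf1, hf2, hW]
      push_cast at h ⊢
      norm_num at h ⊢
      linear_combination x * h
    | (m+2) =>
      have h := hyp_rec (a := a) (b := b) hc (m+2)
      rw [hf0, hf1, hf2, hW]
      simp only [Nat.add_sub_cancel, Nat.succ_sub_one]
      push_cast at h ⊢
      linear_combination x^(m+2) * h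
  have sT : Summable (fun j => x*(1-x) * f2 j + (c-(a+b+1)*x) * f1 j - a*b * f0 j) :=
    ((sf2.mul_left _).add (sf1.mul_left _)).sub (sf0.mul_left _)
  have htel : Tendsto (fun N => ∑ j ∈ Finset.range N, (W j - W (j+1))) atTop (𝓝 0) := by
    have hsum : ∀ N, ∑ j ∈ Finset.range N, (W j - W (j+1)) = W 0 - W N :=
      fun N => Finset.sum_range_sub' W N
    have hW00 : W 0 = 0 := by rw [hW]; norm_num
    simp only [hsum, hW00, zero_sub]
    simpa using hW0.neg
  have hTsum0 : ∑' j, (x*(1-x) * f2 j + (c-(a+b+1)*x) * f1 j - a*b * f0 j) = 0 := by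
    have h2 := sT.hasSum.tendsto_sum_nat
    have h3 : (fun N => ∑ j ∈ Finset.range N,
        (x*(1-x) * f2 j + (c-(a+b+1)*x) * f1 j - a*b * f0 j))
        = fun N => ∑ j ∈ Finset.range N, (W j - W (j+1)) :=
      funext fun N => Finset.sum_congr rfl (fun j _ => key j)
    rw [h3] at h2
    exact tendsto_nhds_unique h2 htel
  have e1 : ∑' j, (x*(1-x) * f2 j + (c-(a+b+1)*x) * f1 j - a*b * f0 j)
      = x*(1-x) * (∑' j, f2 j) + (c-(a+b+1)*x) * (∑' j, f1 j) - a*b * (∑' j, f0 j) := by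
    rw [Summable.tsum_sub ((sf2.mul_left _).add (sf1.mul_left _)) (sf0.mul_left _),
      Summable.tsum_add (sf2.mul_left _) (sf1.mul_left _), tsum_mul_left, tsum_mul_left, tsum_mul_left]
  have e2 : hypF2 a b c x = ∑' j, f2 j := rfl
  have e3 : hypF1 a b c x = ∑' j, f1 j := rfl
  have e4 : hypF a b c x = ∑' j, f0 j := rfl
  rw [e2, e3, e4]
  rw [e1] at hTsum0
  linarith

/-- The first hypergeometric solution
`ψ₁(λ,ρ) = F((n−μ)/2, (n+μ)/2, n + 1/2, ρ²)` with `μ = √(n² + λ)`. -/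
noncomputable def psi1 (n : ℕ) (lam ρ : ℝ) : ℝ :=
  hypF (((n : ℝ) - Real.sqrt ((n : ℝ) ^ 2 + lam)) / 2)
    (((n : ℝ) + Real.sqrt ((n : ℝ) ^ 2 + lam)) / 2) ((n : ℝ) + 1 / 2) (ρ ^ 2)

/-- The second hypergeometric solution
`ψ₂(λ,ρ) = ρ^{1−2n} F((1−n−μ)/2, (1−n+μ)/2, 3/2 − n, ρ²)` with `μ = √(n² + λ)`. -/
noncomputable def psi2 (n : ℕ) (lam ρ : ℝ) : ℝ :=
  hypF ((1 - (n : ℝ) - Real.sqrt ((n : ℝ) ^ 2 + lam)) / 2)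
    ((1 - (n : ℝ) + Real.sqrt ((n : ℝ) ^ 2 + lam)) / 2) (3 / 2 - (n : ℝ)) (ρ ^ 2)
    / ρ ^ (2 * n - 1)

/-- The radial equation
`(1−ρ²)·φ''(ρ) + ((2n − (2n+1)ρ²)/ρ)·φ'(ρ) = −λ·φ(ρ)` at the point `ρ`. -/
def RadialEq (n : ℕ) (lam : ℝ) (φ : ℝ → ℝ) (ρ : ℝ) : Prop :=
  (1 - ρ ^ 2) * deriv (deriv φ) ρ
    + ((2 * (n : ℝ) - (2 * (n : ℝ) + 1) * ρ ^ 2) / ρ) * deriv φ ρ = -lam * φ ρ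

lemma hypF_zero (a b c : ℝ) : hypF a b c 0 = 1 := by
  rw [hypF, tsum_eq_single 0 (fun j hj => by simp [zero_pow hj])]
  simp [hypCoeff, poch_zero]

/-- for every positive integer `k`, the function
`φ_k(ρ) = F(−k/2, n+k/2, n+1/2, ρ²)` is a nontrivial solution of the radial
equation with parameter `λ_k = k(k+2n)`; indeed `φ_k(ρ) → 1` as `ρ → 0⁺`. -/
theorem eigenfunction_phi_k (n : ℕ) (hn : 1 ≤ n) (k : ℕ) (hk : 1 ≤ k) :
    (∀ ρ ∈ Set.Ioo (0 : ℝ) 1,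
        RadialEq n ((k : ℝ) * ((k : ℝ) + 2 * (n : ℝ)))
          (fun ρ => hypF (-(k : ℝ) / 2) ((n : ℝ) + (k : ℝ) / 2)
            ((n : ℝ) + 1 / 2) (ρ ^ 2)) ρ) ∧
      Filter.Tendsto
        (fun ρ : ℝ => hypF (-(k : ℝ) / 2) ((n : ℝ) + (k : ℝ) / 2)
          ((n : ℝ) + 1 / 2) (ρ ^ 2))
        (nhdsWithin 0 (Set.Ioi 0)) (nhds 1) := by
  set a : ℝ := -(k : ℝ) / 2 with ha
  set b : ℝ := (n : ℝ) + (k : ℝ) / 2 with hb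
  set c : ℝ := (n : ℝ) + 1 / 2 with hc'
  have hc : 0 < c := by rw [hc']; positivity
  constructor
  · intro ρ hρ
    obtain ⟨hρ0, hρ1⟩ := hρ
    have hx0 : 0 < ρ^2 := by positivity
    have hx1 : ρ^2 < 1 := by nlinarith
    set r : ℝ := (ρ^2+1)/2 with hr
    have hr0 : 0 < r := by rw [hr]; linarith
    have hr1 : r < 1 := by rw [hr]; linarith
    have hxr : ρ^2 < r := by rw [hr]; linarith
    set U : Set ℝ := {ρ' : ℝ | ρ'^2 < r} with hUdef
    have hU : IsOpen U := isOpen_lt (continuous_pow 2) continuous_const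
    have hρU : ρ ∈ U := hxr
    have hmem : ∀ ρ' ∈ U, ρ'^2 ∈ Set.Ioo (-r) r :=
      fun ρ' h => ⟨by nlinarith [sq_nonneg ρ'], h⟩
    have hDφ : ∀ ρ' ∈ U, HasDerivAt (fun t : ℝ => hypF a b c (t^2))
        (hypF1 a b c (ρ'^2) * (2*ρ')) ρ' := by
      intro ρ' h
      have h2 : HasDerivAt (fun y : ℝ => y^2) (2*ρ') ρ' := by
        simpa using hasDerivAt_pow 2 ρ'
      have h1 := HasDerivAt.comp (h := fun y : ℝ => y^2) ρ'
        (hasDerivAt_hypF (a := a) (b := b) hc hr0 hr1 (hmem ρ' h)) h2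
      exact h1
    have hd1 : ∀ ρ' ∈ U, deriv (fun t : ℝ => hypF a b c (t^2)) ρ'
        = hypF1 a b c (ρ'^2) * (2*ρ') := fun ρ' h => (hDφ ρ' h).deriv
    have heq : deriv (fun t : ℝ => hypF a b c (t^2))
        =ᶠ[𝓝 ρ] (fun ρ' => hypF1 a b c (ρ'^2) * (2*ρ')) := by
      filter_upwards [hU.mem_nhds hρU] with ρ' h using hd1 ρ' h
    have hD1 : HasDerivAt (fun ρ' : ℝ => hypF1 a b c (ρ'^2))
        (hypF2 a b c (ρ^2) * (2*ρ)) ρ := by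
      have h2 : HasDerivAt (fun y : ℝ => y^2) (2*ρ) ρ := by
        simpa using hasDerivAt_pow 2 ρ
      have h1 := HasDerivAt.comp (h := fun y : ℝ => y^2) ρ
        (hasDerivAt_hypF1 (a := a) (b := b) hc hr0 hr1 (hmem ρ hρU)) h2
      exact h1
    have hv : HasDerivAt (fun ρ' : ℝ => 2*ρ') 2 ρ := by
      simpa using (hasDerivAt_id ρ).const_mul (2:ℝ)
    have hD2 : HasDerivAt (fun ρ' : ℝ => hypF1 a b c (ρ'^2) * (2*ρ'))
        (hypF2 a b c (ρ^2) * (2*ρ) * (2*ρ) + hypF1 a b c (ρ^2) * 2) ρ := hD1.mul hv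
    have hd2 : deriv (deriv (fun t : ℝ => hypF a b c (t^2))) ρ
        = hypF2 a b c (ρ^2) * (2*ρ) * (2*ρ) + hypF1 a b c (ρ^2) * 2 := by
      rw [heq.deriv_eq]; exact hD2.deriv
    have hI := hypODE (a := a) (b := b) hc hx0 hx1
    have hρne : ρ ≠ 0 := ne_of_gt hρ0
    show (1 - ρ ^ 2) * deriv (deriv (fun t : ℝ => hypF a b c (t^2))) ρ
        + ((2 * (n : ℝ) - (2 * (n : ℝ) + 1) * ρ ^ 2) / ρ)
          * deriv (fun t : ℝ => hypF a b c (t^2)) ρ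
        = -((k : ℝ) * ((k : ℝ) + 2 * (n : ℝ))) * hypF a b c (ρ^2)
    rw [hd2, hd1 ρ hρU]
    have hdiv : ((2 * (n : ℝ) - (2 * (n : ℝ) + 1) * ρ ^ 2) / ρ)
        * (hypF1 a b c (ρ^2) * (2*ρ))
        = 2 * (2 * (n : ℝ) - (2 * (n : ℝ) + 1) * ρ ^ 2) * hypF1 a b c (ρ^2) := by
      field_simp
    rw [hdiv, ha, hb, hc'] at *
    linear_combination 4 * hI
  · have hcont : ContinuousAt (fun y => hypF a b c y) 0 :=
      (hasDerivAt_hypF hc (r := 1/2) (by norm_num) (by norm_num)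
        (by constructor <;> norm_num)).continuousAt
    have hsq : Tendsto (fun ρ : ℝ => ρ^2) (𝓝[>] 0) (𝓝 0) := by
      have := ((continuous_pow 2).tendsto (0:ℝ)).mono_left
        (nhdsWithin_le_nhds (s := Set.Ioi (0:ℝ)))
      simpa using this
    have h := hcont.tendsto.comp hsq
    rw [hypF_zero] at h
    exact h
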